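/- Let b ∈ (0,1) be the unique solution of 2·log b = 3(b−1). Then for every x ∈ (0,b) one has x(1−x) < 2(x² − x − x·log x), and for every x ∈ (b,1) one has x(1−x) > 2(x² − x − x·log x). -/

import Mathlib

/-- For the unique solution `b ∈ (0,1)` of `2 log b = 3(b−1)`: below `b` the gain of
stopping on a second best candidate is smaller than the continuation payoff, and above
`b` it is larger. -/
theorem threshold_b_sign_characterization (b : ℝ) (hb : b ∈ Set.Ioo (0 : ℝ) 1)
    (hb_eq : 2 * Real.log b = 3 * (b - 1))
    (hb_unique : ∀ b' : ℝ, b' ∈ Set.Ioo (0 : ℝ) 1 → 2 * Real.log b' = 3 * (b' - 1) → b' = b) :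
    (∀ x : ℝ, 0 < x → x < b →
        x * (1 - x) < 2 * (x ^ 2 - x - x * Real.log x)) ∧
      ∀ x : ℝ, b < x → x < 1 →
        x * (1 - x) > 2 * (x ^ 2 - x - x * Real.log x) := by
  obtain ⟨hb0, hb1⟩ := hb
  constructor
  · intro x hx0 hxb
    -- b = a • x + c • 1 with a = (1-b)/(1-x), c = (b-x)/(1-x)
    have hx1 : x < 1 := lt_trans hxb hb1
    have hden : (0:ℝ) < 1 - x := by linarith
    set a : ℝ := (1 - b) / (1 - x) with ha_def
    set c : ℝ := (b - x) / (1 - x) with hc_def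
    have ha : 0 < a := div_pos (by linarith) hden
    have hc : 0 < c := div_pos (by linarith) hden
    have hac : a + c = 1 := by rw [ha_def, hc_def, ← add_div, div_eq_one_iff_eq hden.ne']; ring
    have hcomb : a • x + c • (1:ℝ) = b := by
      rw [smul_eq_mul, smul_eq_mul, ha_def, hc_def]; field_simp; ring
    have hlog := strictConcaveOn_log_Ioi.2 (Set.mem_Ioi.2 hx0)
      (Set.mem_Ioi.2 one_pos) (ne_of_lt hx1) ha hc hac
    rw [hcomb, Real.log_one] at hlog
    -- hlog : a * log x + c * 0 < log b
    have hkey : 2 * Real.log x < 3 * (x - 1) := by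
      have h1 : a * Real.log x < Real.log b := by
        simpa using hlog
      have h2 : 2 * (a * Real.log x) < 3 * (b - 1) := by
        rw [← hb_eq]; linarith
      have h3 : a * (2 * Real.log x) < a * (3 * (x - 1)) := by
        have : a * (3 * (x - 1)) = 3 * (b - 1) := by
          simp only [ha_def]; field_simp; ring
        rw [this]; linarith
      exact lt_of_mul_lt_mul_left h3 (le_of_lt ha)
    nlinarith [mul_pos hx0 (sub_pos.2 hkey)]
  · intro x hbx hx1
    have hx0 : 0 < x := lt_trans hb0 hbx
    have hden : (0:ℝ) < 1 - b := by linarith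
    set a : ℝ := (1 - x) / (1 - b) with ha_def
    set c : ℝ := (x - b) / (1 - b) with hc_def
    have ha : 0 < a := div_pos (by linarith) hden
    have hc : 0 < c := div_pos (by linarith) hden
    have hac : a + c = 1 := by rw [ha_def, hc_def, ← add_div, div_eq_one_iff_eq hden.ne']; ring
    have hcomb : a • b + c • (1:ℝ) = x := by
      rw [smul_eq_mul, smul_eq_mul, ha_def, hc_def]; field_simp; ring
    have hlog := strictConcaveOn_log_Ioi.2 (Set.mem_Ioi.2 hb0)
      (Set.mem_Ioi.2 one_pos) (ne_of_lt hb1) ha hc hac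
    rw [hcomb, Real.log_one] at hlog
    have hkey : 3 * (x - 1) < 2 * Real.log x := by
      have h1 : a * Real.log b < Real.log x := by
        simpa using hlog
      have h2 : a * (2 * Real.log b) < 2 * Real.log x := by linarith
      have h3 : a * (2 * Real.log b) = 3 * (x - 1) := by
        rw [hb_eq]; simp only [ha_def]; field_simp; ring
      linarith [h3 ▸ h2]
    nlinarith [mul_pos hx0 (sub_pos.2 hkey)]
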